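/- For every n ≥ 1 and every traceless n×n complex matrix A, there exist a unique traceless skew-Hermitian matrix B (Bᴴ = −B, tr B = 0) and a unique traceless upper triangular matrix C with real diagonal entries (C i j = 0 for i > j, C i i ∈ ℝ, tr C = 0) such that A = B + C. In other words, as real vector spaces, sl(n,ℂ) = su(n) ⊕ sb(n,ℂ). -/

import Mathlib

open Matrix

/-- Every traceless `n × n` complex matrix `A` decomposes uniquely as `A = B + C` with
`B` traceless skew-Hermitian (`B ∈ su(n)`) and `C` traceless upper triangular with real
diagonal entries (`C ∈ sb(n,ℂ)`): as real vector spaces,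
`sl(n,ℂ) = su(n) ⊕ sb(n,ℂ)`. -/
theorem sl_eq_su_oplus_sb (n : ℕ) (hn : 1 ≤ n)
    (A : Matrix (Fin n) (Fin n) ℂ) (hA : A.trace = 0) :
    ∃! p : Matrix (Fin n) (Fin n) ℂ × Matrix (Fin n) (Fin n) ℂ,
      (p.1ᴴ = -p.1 ∧ p.1.trace = 0)
        ∧ ((∀ i j, j < i → p.2 i j = 0) ∧ (∀ i, (p.2 i i).im = 0) ∧ p.2.trace = 0)
        ∧ A = p.1 + p.2 := by
  set B : Matrix (Fin n) (Fin n) ℂ := Matrix.of fun i j =>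
    if j < i then A i j
    else if i < j then -(starRingEnd ℂ) (A j i)
    else ((A i i).im : ℂ) * Complex.I with hBdef
  have hBentry : ∀ i j, B i j =
      if j < i then A i j
      else if i < j then -(starRingEnd ℂ) (A j i)
      else ((A i i).im : ℂ) * Complex.I := fun i j => rfl
  have hBdiag : ∀ i, B i i = ((A i i).im : ℂ) * Complex.I := by
    intro i; simp [hBentry]
  have him : ∑ i, (A i i).im = 0 := by
    have h0 : (A.trace).im = 0 := by rw [hA]; rfl
    simpa [Matrix.trace, Matrix.diag, Complex.im_sum] using h0
  have hBtr : B.trace = 0 := by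
    simp only [Matrix.trace, Matrix.diag]
    rw [show (∑ i, B i i) = ∑ i, ((A i i).im : ℂ) * Complex.I from
      Finset.sum_congr rfl fun i _ => hBdiag i, ← Finset.sum_mul,
      ← Complex.ofReal_sum, him]
    simp
  have hBskew : Bᴴ = -B := by
    ext i j
    simp only [conjTranspose_apply, Matrix.neg_apply, hBentry]
    rcases lt_trichotomy i j with h | h | h
    · rw [if_pos h, if_neg (lt_asymm h), if_pos h]
      simp
    · subst h
      simp [Complex.ext_iff]
    · rw [if_neg (lt_asymm h), if_neg (lt_asymm h), if_pos h, if_pos h]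
      simp
  refine ⟨(B, A - B), ⟨⟨hBskew, hBtr⟩, ⟨?_, ?_, ?_⟩, by simp⟩, ?_⟩
  · intro i j hji
    simp [Matrix.sub_apply, hBentry, if_pos hji]
  · intro i
    simp [Matrix.sub_apply, hBdiag, Complex.ext_iff]
  · rw [Matrix.trace_sub, hA, hBtr, sub_zero]
  · rintro ⟨B', C'⟩ ⟨⟨hskew, -⟩, ⟨hlow, hdiag, -⟩, hsum⟩
    dsimp only at hskew hsum hlow hdiag
    have hC' : C' = A - B' := by
      rw [hsum]; abel
    have hB'skew : ∀ i j, (starRingEnd ℂ) (B' j i) = -B' i j := by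
      intro i j
      have := congrFun (congrFun hskew i) j
      simpa [conjTranspose_apply] using this
    have hB'eq : B' = B := by
      ext i j
      rcases lt_trichotomy i j with h | h | h
      · have h1 : B' j i = A j i := by
          have := hlow j i h
          have h2 := congrFun (congrFun hsum j) i
          simp only [Matrix.add_apply, this, add_zero] at h2
          exact h2.symm
        have := hB'skew i j
        rw [h1] at this
        rw [hBentry, if_neg (lt_asymm h), if_pos h, this, neg_neg]
      · subst h
        have hCi : C' i i = A i i - B' i i := by rw [hC']; simp
        have him : (B' i i).re = 0 := by
          have := hB'skew i i
          have := congrArg Complex.re this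
          simp at this
          linarith
        have hre : (C' i i).im = 0 := hdiag i
        rw [hCi] at hre
        simp [Complex.sub_im] at hre
        rw [hBdiag]
        apply Complex.ext
        · simp [him]
        · simp; linarith
      · have := hlow i j h
        have h2 := congrFun (congrFun hsum i) j
        simp only [Matrix.add_apply, this, add_zero] at h2
        rw [hBentry, if_pos h]
        exact h2.symm
    rw [Prod.ext_iff]
    exact ⟨hB'eq, by rw [hC', hB'eq]⟩
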